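/- For every integer k ≥ 1, the end vertex of the path transmits with probability at least 1/2: the number of permutations σ of {1,…,k} with 1 ∈ S(σ) is at least k!/2. -/

import Mathlib

/-- The greedy independent set on the path `P_k` (vertex `i : Fin k` stands for vertex
`i+1` of `{1,…,k}`, and `i`, `i+1` are adjacent): vertices are processed in increasing
order of their priority rank (`σ i` is the rank of vertex `i`, smaller = higher
priority), and a vertex is inserted iff none of its neighbours is already in the set. -/
def pathGreedy (k : ℕ) (σ : Equiv.Perm (Fin k)) : Finset (Fin k) :=
  (List.finRange k).foldl
    (fun D r =>
      if ∀ j ∈ D, ¬ ((σ.symm r : ℕ) + 1 = (j : ℕ) ∨ (j : ℕ) + 1 = (σ.symm r : ℕ))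
      then insert (σ.symm r) D else D)
    ∅

namespace PGaux

variable {k : ℕ}

/-- One step of the greedy process. -/
def step (σ : Equiv.Perm (Fin k)) (D : Finset (Fin k)) (r : Fin k) : Finset (Fin k) :=
  if ∀ j ∈ D, ¬ ((σ.symm r : ℕ) + 1 = (j : ℕ) ∨ (j : ℕ) + 1 = (σ.symm r : ℕ))
  then insert (σ.symm r) D else D

/-- The greedy set after processing ranks `< t`. -/
def Dset (σ : Equiv.Perm (Fin k)) (t : ℕ) : Finset (Fin k) :=
  ((List.finRange k).take t).foldl (step σ) ∅

lemma pathGreedy_eq (σ : Equiv.Perm (Fin k)) : pathGreedy k σ = Dset σ k := by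
  unfold pathGreedy Dset step
  rw [List.take_of_length_le (by simp)]

lemma Dset_succ (σ : Equiv.Perm (Fin k)) {t : ℕ} (ht : t < k) :
    Dset σ (t + 1) = step σ (Dset σ t) ⟨t, ht⟩ := by
  unfold Dset
  rw [List.take_succ, List.getElem?_eq_getElem (by simpa using ht)]
  simp

lemma Dset_stable (σ : Equiv.Perm (Fin k)) {t : ℕ} (ht : k ≤ t) :
    Dset σ (t + 1) = Dset σ t := by
  unfold Dset
  rw [List.take_of_length_le (by simp; omega),
    List.take_of_length_le (by simpa using ht)]

lemma mem_Dset_succ {σ : Equiv.Perm (Fin k)} {j : Fin k} {t : ℕ}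
    (h : j ∈ Dset σ t) : j ∈ Dset σ (t + 1) := by
  by_cases ht : t < k
  · rw [Dset_succ σ ht]
    unfold step
    split
    · exact Finset.mem_insert_of_mem h
    · exact h
  · rwa [Dset_stable σ (by omega)]

lemma mem_Dset_mono {σ : Equiv.Perm (Fin k)} {j : Fin k} {s t : ℕ}
    (hst : s ≤ t) (h : j ∈ Dset σ s) : j ∈ Dset σ t := by
  induction t with
  | zero =>
    have : s = 0 := by omega
    rwa [this] at h
  | succ n ih =>
    rcases Nat.lt_or_ge s (n + 1) with h' | h'
    · exact mem_Dset_succ (ih (by omega))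
    · have : s = n + 1 := by omega
      rwa [this] at h

lemma rank_lt_of_mem {σ : Equiv.Perm (Fin k)} {j : Fin k} {t : ℕ}
    (h : j ∈ Dset σ t) : (σ j : ℕ) < t := by
  induction t with
  | zero => simp [Dset] at h
  | succ n ih =>
    by_cases hn : n < k
    · rw [Dset_succ σ hn] at h
      unfold step at h
      split at h
      · rcases Finset.mem_insert.1 h with h | h
        · subst h
          simp only [Equiv.apply_symm_apply, Fin.val_mk]
          omega
        · exact Nat.lt_succ_of_lt (ih h)
      · exact Nat.lt_succ_of_lt (ih h)
    · rw [Dset_stable σ (by omega)] at h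
      exact Nat.lt_succ_of_lt (ih h)

lemma Dset_congr {σ τ : Equiv.Perm (Fin k)} {t : ℕ}
    (h : ∀ r : Fin k, (r : ℕ) < t → σ.symm r = τ.symm r) :
    Dset σ t = Dset τ t := by
  induction t with
  | zero => rfl
  | succ n ih =>
    have ih' := ih (fun r hr => h r (by omega))
    by_cases hn : n < k
    · rw [Dset_succ σ hn, Dset_succ τ hn]
      unfold step
      rw [h ⟨n, hn⟩ (by simp only [Fin.val_mk]; omega), ih']
    · rw [Dset_stable σ (by omega), Dset_stable τ (by omega), ih']

lemma mem_of_free {σ : Equiv.Perm (Fin k)} {v : Fin k}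
    (h : ∀ j ∈ Dset σ (σ v : ℕ),
      ¬ ((v : ℕ) + 1 = (j : ℕ) ∨ (j : ℕ) + 1 = (v : ℕ))) :
    v ∈ pathGreedy k σ := by
  rw [pathGreedy_eq]
  have hv : (σ v : ℕ) < k := (σ v).isLt
  have hsymm : σ.symm ⟨(σ v : ℕ), hv⟩ = v := by simp
  have hmem : v ∈ Dset σ ((σ v : ℕ) + 1) := by
    rw [Dset_succ σ hv]
    unfold step
    rw [hsymm, if_pos h]
    exact Finset.mem_insert_self _ _
  exact mem_Dset_mono hv hmem

/-- If `σ 1 ≥ σ 0` then vertex `0` enters the greedy set. -/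
lemma v0_mem_of_not_lt {σ : Equiv.Perm (Fin k)} (hk2 : 2 ≤ k)
    (h : ¬ ((σ ⟨1, by omega⟩ : ℕ) < (σ ⟨0, by omega⟩ : ℕ))) :
    (⟨0, by omega⟩ : Fin k) ∈ pathGreedy k σ := by
  apply mem_of_free
  intro j hj hadj
  have hrank := rank_lt_of_mem hj
  simp only [Fin.val_mk] at hadj
  rcases hadj with h1 | h1
  · have hj1 : j = (⟨1, by omega⟩ : Fin k) := by
      apply Fin.ext
      simp only [Fin.val_mk]
      omega
    rw [hj1] at hrank
    exact h hrank
  · omega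

/-- If `σ 1 < σ 0` then vertex `0` enters the greedy set of `σ * swap 0 1`. -/
lemma v0_mem_swap {σ : Equiv.Perm (Fin k)} (hk2 : 2 ≤ k)
    (h : (σ ⟨1, by omega⟩ : ℕ) < (σ ⟨0, by omega⟩ : ℕ)) :
    (⟨0, by omega⟩ : Fin k) ∈
      pathGreedy k (σ * Equiv.swap ⟨0, by omega⟩ ⟨1, by omega⟩) := by
  set v0 : Fin k := ⟨0, by omega⟩ with hv0
  set v1 : Fin k := ⟨1, by omega⟩ with hv1
  set τ : Equiv.Perm (Fin k) := σ * Equiv.swap v0 v1 with hτ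
  have hv0v : (v0 : ℕ) = 0 := rfl
  have hv1v : (v1 : ℕ) = 1 := rfl
  have hτ0 : τ v0 = σ v1 := by
    simp [hτ, Equiv.Perm.mul_apply, Equiv.swap_apply_left]
  have hτsymm : ∀ r : Fin k, τ.symm r = Equiv.swap v0 v1 (σ.symm r) := by
    intro r
    show ((σ * Equiv.swap v0 v1)⁻¹) r = _
    rw [mul_inv_rev, Equiv.Perm.mul_apply]
    rfl
  have hagree : ∀ r : Fin k, (r : ℕ) < (σ v1 : ℕ) → τ.symm r = σ.symm r := by
    intro r hr
    rw [hτsymm]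
    apply Equiv.swap_apply_of_ne_of_ne
    · intro he
      have hre : r = σ v0 := by
        have := congrArg σ he
        simpa using this
      rw [hre] at hr
      omega
    · intro he
      have hre : r = σ v1 := by
        have := congrArg σ he
        simpa using this
      rw [hre] at hr
      omega
  have hDeq : Dset τ (σ v1 : ℕ) = Dset σ (σ v1 : ℕ) :=
    Dset_congr (fun r hr => hagree r hr)
  apply mem_of_free
  intro j hj hadj
  rw [hτ0, hDeq] at hj
  have hrank := rank_lt_of_mem hj
  rw [hv0v] at hadj
  rcases hadj with h1 | h1
  · have hj1 : j = v1 := by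
      apply Fin.ext
      rw [hv1v]
      omega
    rw [hj1] at hrank
    omega
  · omega

end PGaux

/-- For every `k ≥ 1`, the end vertex of the path transmits with probability at least
`1/2`: the number of permutations `σ` of `{1,…,k}` with `1 ∈ S(σ)` is at least `k!/2`. -/
theorem end_vertex_at_least_half (k : ℕ) (hk : 1 ≤ k) :
    (Nat.factorial k : ℝ) / 2 ≤
      ((Finset.univ.filter
          (fun σ : Equiv.Perm (Fin k) => (⟨0, hk⟩ : Fin k) ∈ pathGreedy k σ)).card : ℝ) := by
  rcases Nat.lt_or_ge k 2 with hk1 | hk2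
  · -- k = 1
    have hkeq : k = 1 := by omega
    subst hkeq
    have hall : ∀ σ : Equiv.Perm (Fin 1), (⟨0, hk⟩ : Fin 1) ∈ pathGreedy 1 σ := by
      intro σ
      have h1 : List.finRange 1 = [0] := rfl
      unfold pathGreedy
      rw [h1]
      simp only [List.foldl_cons, List.foldl_nil, Finset.notMem_empty, false_implies,
        implies_true, if_true]
      have : (⟨0, hk⟩ : Fin 1) = σ.symm 0 := Subsingleton.elim _ _
      rw [this]
      exact Finset.mem_insert_self _ _
    have hcard : (Finset.univ.filter
        (fun σ : Equiv.Perm (Fin 1) => (⟨0, hk⟩ : Fin 1) ∈ pathGreedy 1 σ)).card = 1 := by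
      rw [Finset.filter_true_of_mem (fun σ _ => hall σ), Finset.card_univ]
      simp [Fintype.card_perm]
    rw [hcard]
    norm_num [Nat.factorial]
  · -- k ≥ 2
    set v0 : Fin k := ⟨0, by omega⟩ with hv0
    set v1 : Fin k := ⟨1, by omega⟩ with hv1
    set P : Equiv.Perm (Fin k) → Prop := fun σ => (⟨0, hk⟩ : Fin k) ∈ pathGreedy k σ with hP
    have hle : (Finset.univ.filter (fun σ => ¬ P σ)).card ≤
        (Finset.univ.filter P).card := by
      apply Finset.card_le_card_of_injOn (fun σ => σ * Equiv.swap v0 v1)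
      · intro σ hσ
        simp only [Finset.mem_coe, Finset.mem_filter, Finset.mem_univ, true_and, hP] at hσ ⊢
        have hlt : (σ v1 : ℕ) < (σ v0 : ℕ) := by
          by_contra hcon
          exact hσ (PGaux.v0_mem_of_not_lt hk2 hcon)
        exact PGaux.v0_mem_swap hk2 hlt
      · intro a _ b _ hab
        exact mul_right_cancel hab
    have hsum : (Finset.univ.filter P).card + (Finset.univ.filter (fun σ => ¬ P σ)).card
        = Nat.factorial k := by
      rw [Finset.card_filter_add_card_filter_not]
      simp [Fintype.card_perm]
    have h2 : Nat.factorial k ≤ 2 * (Finset.univ.filter P).card := by omega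
    rw [div_le_iff₀ (by norm_num)]
    calc (Nat.factorial k : ℝ) ≤ ((2 * (Finset.univ.filter P).card : ℕ) : ℝ) := by
          exact_mod_cast h2
      _ = ((Finset.univ.filter P).card : ℝ) * 2 := by push_cast; ring
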